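/- For every real z with 0 < z < 1, one has ∫ 1/((z + 1/z) − t) dσ(t) = z. Consequently the inverse K_σ of the Stieltjes transform G_σ on (0,1) is K_σ(z) = z + 1/z, and the R-transform R_σ(z) := K_σ(z) − 1/z of the semicircle law equals z. -/

import Mathlib

open MeasureTheory

noncomputable section

/-- The semicircle law: density `√(4-t²)/(2π)` on `[-2,2]`. -/
def semicircle : Measure ℝ :=
  volume.withDensity fun t => ENNReal.ofReal (Real.sqrt (4 - t ^ 2) / (2 * Real.pi))

/-- The Stieltjes (Cauchy) transform of the semicircle law. -/
def Gsc (x : ℝ) : ℝ := ∫ t, (x - t)⁻¹ ∂semicircle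

open Real Set

lemma ftc_sc {x : ℝ} (hx : 2 < x) :
    ∫ t in (-2:ℝ)..2, Real.sqrt (4 - t ^ 2) * (x - t)⁻¹
      = Real.pi * (x - Real.sqrt (x ^ 2 - 4)) := by
  have hx4 : (0:ℝ) < x ^ 2 - 4 := by nlinarith
  set s : ℝ := Real.sqrt (x ^ 2 - 4) with hs
  have hs_pos : 0 < s := Real.sqrt_pos.mpr hx4
  have hs_sq : s ^ 2 = x ^ 2 - 4 := Real.sq_sqrt hx4.le
  set F : ℝ → ℝ := fun t =>
    x * Real.arcsin (t / 2) - Real.sqrt (4 - t ^ 2)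
      - s * Real.arcsin ((x * t - 4) / (2 * (x - t))) with hF
  have hcont : ContinuousOn F (Icc (-2:ℝ) 2) := by
    apply ContinuousOn.sub
    apply ContinuousOn.sub
    · exact (continuous_const.mul (Real.continuous_arcsin.comp (continuous_id.div_const 2))).continuousOn
    · exact (Real.continuous_sqrt.comp (by continuity)).continuousOn
    · apply ContinuousOn.mul continuousOn_const
      apply Real.continuous_arcsin.comp_continuousOn
      apply ContinuousOn.div (by fun_prop) (by fun_prop)
      intro t ht h
      have h1 : t < x := lt_of_le_of_lt ht.2 hx
      have h2 : (0:ℝ) < 2 * (x - t) := by linarith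
      rw [h] at h2; exact lt_irrefl 0 h2
  have hderiv : ∀ t ∈ Ioo (-2:ℝ) 2,
      HasDerivAt F (Real.sqrt (4 - t ^ 2) * (x - t)⁻¹) t := by
    intro t ht
    have ht4 : (0:ℝ) < 4 - t ^ 2 := by nlinarith [ht.1, ht.2]
    set r : ℝ := Real.sqrt (4 - t ^ 2) with hr
    have hr_pos : 0 < r := Real.sqrt_pos.mpr ht4
    have hr_sq : r ^ 2 = 4 - t ^ 2 := Real.sq_sqrt ht4.le
    have hxt : 0 < x - t := by linarith [ht.2]
    -- term 1
    have e1 : Real.sqrt (1 - (t / 2) ^ 2) = r / 2 := by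
      have h : 1 - (t / 2) ^ 2 = (r / 2) ^ 2 := by
        rw [div_pow, div_pow, hr_sq]; ring
      rw [h, Real.sqrt_sq (by positivity)]
    have ht2 : |t / 2| < 1 := by
      rw [abs_lt]; constructor
      · linarith [ht.1]
      · linarith [ht.2]
    have d1 : HasDerivAt (fun t : ℝ => x * Real.arcsin (t / 2))
        (x * (1 / (r / 2) * (1 / 2))) t := by
      have ha := Real.hasDerivAt_arcsin (abs_lt.mp ht2).1.ne' (ne_of_lt (abs_lt.mp ht2).2)
      have hb : HasDerivAt (fun t : ℝ => t / 2) (1 / 2) t := (hasDerivAt_id t).div_const 2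
      have hc := ha.comp t hb
      rw [e1] at hc
      exact hc.const_mul x
    -- term 2
    have d2 : HasDerivAt (fun t : ℝ => Real.sqrt (4 - t ^ 2))
        (1 / (2 * r) * (-(2 * t))) t := by
      have hb : HasDerivAt (fun t : ℝ => 4 - t ^ 2) (-(2 * t)) t := by
        have := (hasDerivAt_pow 2 t).const_sub 4
        simpa using this
      exact (Real.hasDerivAt_sqrt (ne_of_gt ht4)).comp t hb
    -- term 3
    set u : ℝ → ℝ := fun t => (x * t - 4) / (2 * (x - t)) with hu
    have hden : (2 : ℝ) * (x - t) ≠ 0 := by positivity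
    have hq : 1 - u t ^ 2 = (r * s / (2 * (x - t))) ^ 2 := by
      simp only [hu]
      field_simp
      nlinarith [hr_sq, hs_sq]
    have e2 : Real.sqrt (1 - u t ^ 2) = r * s / (2 * (x - t)) := by
      rw [hq, Real.sqrt_sq (by positivity)]
    have hu_lt : u t ^ 2 < 1 := by
      have hp : 0 < (r * s / (2 * (x - t))) ^ 2 := by positivity
      nlinarith [hq]
    have hune : u t ≠ 1 := by intro h; rw [h] at hu_lt; norm_num at hu_lt
    have hune' : u t ≠ -1 := by intro h; rw [h] at hu_lt; norm_num at hu_lt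
    have du : HasDerivAt u ((x * (2 * (x - t)) - (x * t - 4) * (-2)) / (2 * (x - t)) ^ 2) t := by
      have hnum : HasDerivAt (fun t : ℝ => x * t - 4) x t := by
        simpa using ((hasDerivAt_id t).const_mul x).sub_const 4
      have hden' : HasDerivAt (fun t : ℝ => 2 * (x - t)) (-2) t := by
        have := ((hasDerivAt_id t).const_sub x).const_mul 2
        simpa using this
      exact (hnum.div hden' hden).congr_deriv (by ring)
    have d3 : HasDerivAt (fun t : ℝ => s * Real.arcsin (u t))
        (s * (1 / (r * s / (2 * (x - t))) *
          ((x * (2 * (x - t)) - (x * t - 4) * (-2)) / (2 * (x - t)) ^ 2))) t := by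
      have ha := Real.hasDerivAt_arcsin hune' hune
      have hc := ha.comp t du
      rw [e2] at hc
      exact hc.const_mul s
    have dF := (d1.sub d2).sub d3
    refine dF.congr_deriv (Eq.symm ?_)
    have hrne : r ≠ 0 := ne_of_gt hr_pos
    have hsne : s ≠ 0 := ne_of_gt hs_pos
    have hxtne : x - t ≠ 0 := ne_of_gt hxt
    field_simp
    linear_combination hr_sq
  have hint : IntervalIntegrable (fun t => Real.sqrt (4 - t ^ 2) * (x - t)⁻¹) volume (-2) 2 := by
    apply ContinuousOn.intervalIntegrable
    apply ContinuousOn.mul (Real.continuous_sqrt.comp (by continuity)).continuousOn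
    apply ContinuousOn.inv₀ (by fun_prop)
    intro t ht
    have : t ≤ 2 := by
      rcases ht with ht
      simp [uIcc_of_le (by norm_num : (-2:ℝ) ≤ 2)] at ht
      exact ht.2
    have : t < x := lt_of_le_of_lt this hx
    exact sub_ne_zero.mpr (ne_of_gt this)
  rw [intervalIntegral.integral_eq_sub_of_hasDerivAt_of_le (by norm_num) hcont hderiv hint]
  have ha1 : Real.arcsin (2 / 2) = Real.pi / 2 := by norm_num [Real.arcsin_one]
  have ha2 : Real.arcsin (-2 / 2) = -(Real.pi / 2) := by norm_num [Real.arcsin_neg_one]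
  have hb1 : (x * 2 - 4) / (2 * (x - 2)) = 1 := by
    rw [div_eq_one_iff_eq (by intro h; nlinarith)]; ring
  have hb2 : (x * (-2) - 4) / (2 * (x - (-2))) = -1 := by
    rw [div_eq_iff (by intro h; nlinarith)]; ring
  simp only [hF, hb1, hb2, ha1, ha2, Real.arcsin_one, Real.arcsin_neg_one]
  have : Real.sqrt (4 - (2:ℝ) ^ 2) = 0 := by norm_num
  have h2 : Real.sqrt (4 - (-2:ℝ) ^ 2) = 0 := by norm_num
  rw [this, h2]
  ring

lemma Gsc_formula {x : ℝ} (hx : 2 < x) :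
    Gsc x = (x - Real.sqrt (x ^ 2 - 4)) / 2 := by
  have hmeas : Measurable fun t : ℝ => Real.toNNReal (Real.sqrt (4 - t ^ 2) / (2 * Real.pi)) := by
    fun_prop
  have h1 : Gsc x = ∫ t, (Real.toNNReal (Real.sqrt (4 - t ^ 2) / (2 * Real.pi))) • (x - t)⁻¹ := by
    rw [Gsc, semicircle]
    exact integral_withDensity_eq_integral_smul hmeas _
  rw [h1]
  have h2 : ∀ t : ℝ, (Real.toNNReal (Real.sqrt (4 - t ^ 2) / (2 * Real.pi))) • (x - t)⁻¹
      = (2 * Real.pi)⁻¹ * (Real.sqrt (4 - t ^ 2) * (x - t)⁻¹) := by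
    intro t
    rw [NNReal.smul_def, Real.coe_toNNReal _ (by positivity), smul_eq_mul]
    ring
  simp_rw [h2]
  rw [MeasureTheory.integral_const_mul]
  have h3 : ∫ t, Real.sqrt (4 - t ^ 2) * (x - t)⁻¹
      = ∫ t in Icc (-2:ℝ) 2, Real.sqrt (4 - t ^ 2) * (x - t)⁻¹ := by
    rw [setIntegral_eq_integral_of_forall_compl_eq_zero]
    intro t ht
    have : Real.sqrt (4 - t ^ 2) = 0 := by
      apply Real.sqrt_eq_zero_of_nonpos
      rw [mem_Icc, not_and_or] at ht
      rcases ht with h | h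
      · nlinarith [lt_of_not_ge h]
      · nlinarith [lt_of_not_ge h]
    simp [this]
  rw [h3, integral_Icc_eq_integral_Ioc,
    ← intervalIntegral.integral_of_le (by norm_num : (-2:ℝ) ≤ 2), ftc_sc hx]
  have hpi : Real.pi ≠ 0 := Real.pi_ne_zero
  field_simp


/-- For `0 < z < 1`, `∫ 1/((z + 1/z) - t) dσ(t) = z`; consequently the inverse of `G_σ` on
`(0,1)` is `K_σ(z) = z + 1/z`, and the `R`-transform `R_σ(z) = K_σ(z) - 1/z` equals `z`. -/
theorem semicircle_inverse_stieltjes (z : ℝ) (h0 : 0 < z) (h1 : z < 1) :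
    (∫ t, ((z + z⁻¹) - t)⁻¹ ∂semicircle) = z ∧
    (∀ y : ℝ, 2 < y → (Gsc y = z ↔ y = z + z⁻¹)) ∧
    (z + z⁻¹) - z⁻¹ = z := by
  have hinv : z * z⁻¹ = 1 := mul_inv_cancel₀ h0.ne'
  have hz1 : 0 < (1 - z) ^ 2 := pow_pos (by linarith) 2
  have hz2 : 2 < z + z⁻¹ := by nlinarith
  have hnn : 0 ≤ z⁻¹ - z := by nlinarith
  have hsqrt : Real.sqrt ((z + z⁻¹) ^ 2 - 4) = z⁻¹ - z := by
    have h : (z + z⁻¹) ^ 2 - 4 = (z⁻¹ - z) ^ 2 := by nlinarith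
    rw [h, Real.sqrt_sq hnn]
  have part1 : Gsc (z + z⁻¹) = z := by
    rw [Gsc_formula hz2, hsqrt]; ring
  refine ⟨part1, ?_, by ring⟩
  intro y hy
  constructor
  · intro h
    rw [Gsc_formula hy] at h
    have hy4 : (0:ℝ) ≤ y ^ 2 - 4 := by nlinarith
    have hsy : Real.sqrt (y ^ 2 - 4) = y - 2 * z := by linarith
    have hsq := Real.sq_sqrt hy4
    rw [hsy] at hsq
    have hyz : y * z = z ^ 2 + 1 := by nlinarith
    field_simp
    linarith [hyz]
  · intro h; rw [h]; exact part1

end
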